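/- Let T be a tree on 2m vertices that has a perfect matching, where m ≥ 2, and let f be a strictly convex real-valued function. Then H_f(T) ≥ 2(m−1)·f(2) + 2·f(1), with equality only if T is isomorphic to the path P_{2m}. -/
import Mathlib


open scoped Classical

/-- The vertex-degree function index `H_f(G) = Σ_{u ∈ V(G)} f(d(u))`. -/
noncomputable def Hf {V : Type*} [Fintype V] (G : SimpleGraph V) (f : ℝ → ℝ) : ℝ :=
  ∑ v, f (G.degree v)

/-- The degree sequence of a graph, as a multiset of vertex degrees. -/
noncomputable def degSeq {V : Type*} [Fintype V] (G : SimpleGraph V) : Multiset ℕ :=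
  Finset.univ.val.map (fun v => G.degree v)

lemma conv_bound (f : ℝ → ℝ) (hf : StrictConvexOn ℝ Set.univ f) {d : ℕ} (hd : 3 ≤ d) :
    f 2 + (f 2 - f 1) * ((d : ℝ) - 2) < f d := by
  have h2d : (2 : ℝ) < d := by exact_mod_cast by omega
  have := hf.slope_strict_mono_adjacent (Set.mem_univ (1:ℝ)) (Set.mem_univ (d:ℝ))
    (by norm_num : (1:ℝ) < 2) h2d
  have hpos : (0:ℝ) < (d:ℝ) - 2 := by linarith
  rw [div_lt_div_iff₀ (by norm_num) hpos] at this
  nlinarith [this]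

lemma conv_bound_le (f : ℝ → ℝ) (hf : StrictConvexOn ℝ Set.univ f) {d : ℕ} (hd : 1 ≤ d) :
    f 2 + (f 2 - f 1) * ((d : ℝ) - 2) ≤ f d := by
  rcases Nat.lt_or_ge d 3 with h | h
  · interval_cases d <;> push_cast <;> ring_nf <;> norm_num
  · exact (conv_bound f hf h).le

lemma stepdown {V : Type*} {T : SimpleGraph V} (hconn : T.Connected) (v : V) (u : V) (k : ℕ)
    (hk : T.dist u v = k + 1) :
    ∃ w, T.Adj v w ∧ T.dist u w = k := by
  obtain ⟨p, hp⟩ := (hconn u v).exists_walk_length_eq_dist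
  set q := p.reverse with hq
  have hql : q.length = k + 1 := by
    rw [hq, SimpleGraph.Walk.length_reverse, hp, hk]
  have hqn : ¬ q.Nil := by
    rw [SimpleGraph.Walk.nil_iff_length_eq, hql]; omega
  refine ⟨q.getVert 1, q.adj_snd hqn, ?_⟩
  have h1 : T.dist u (q.getVert 1) ≤ k := by
    have hlen : (q.tail).length = k := by
      have := SimpleGraph.Walk.length_tail_add_one hqn
      omega
    have := SimpleGraph.dist_le (q.tail.reverse)
    rwa [SimpleGraph.Walk.length_reverse, hlen] at this
  have h2 : k ≤ T.dist u (q.getVert 1) := by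
    have htri := hconn.dist_triangle (u := u) (v := q.getVert 1) (w := v)
    have hone : T.dist (q.getVert 1) v = 1 := by
      rw [SimpleGraph.dist_eq_one_iff_adj]
      exact (q.adj_snd hqn).symm
    omega
  omega

lemma dist_unique {V : Type*} [Fintype V] {T : SimpleGraph V} (hconn : T.Connected) (u : V)
    (hu : T.degree u = 1) (hdeg : ∀ v, T.degree v ≤ 2) :
    ∀ k v w, T.dist u v = k → T.dist u w = k → v = w := by
  intro k
  induction k using Nat.strong_induction_on with
  | _ k ih =>
    intro v w hv hw
    match k with
    | 0 =>
      have hv' : u = v := ((hconn u v).dist_eq_zero_iff).mp hv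
      have hw' : u = w := ((hconn u w).dist_eq_zero_iff).mp hw
      exact hv' ▸ hw'
    | (k + 1) =>
      by_contra hne
      obtain ⟨v', hv'adj, hv'⟩ := stepdown hconn v u k hv
      obtain ⟨w', hw'adj, hw'⟩ := stepdown hconn w u k hw
      have hxy : v' = w' := ih k (by omega) v' w' hv' hw'
      subst hxy
      match k with
      | 0 =>
        have : u = v' := ((hconn u v').dist_eq_zero_iff).mp hv'
        subst this
        have hsub : ({v, w} : Finset V) ⊆ T.neighborFinset u := by
          intro x hx
          simp only [Finset.mem_insert, Finset.mem_singleton] at hx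
          rcases hx with rfl | rfl
          · exact (T.mem_neighborFinset _ _).mpr hv'adj.symm
          · exact (T.mem_neighborFinset _ _).mpr hw'adj.symm
        have := Finset.card_le_card hsub
        rw [Finset.card_insert_of_notMem (by simpa using hne), Finset.card_singleton] at this
        rw [SimpleGraph.degree] at hu
        omega
      | (j + 1) =>
        obtain ⟨y, hyadj, hy⟩ := stepdown hconn v' u j hv'
        have hyv : y ≠ v := fun h => by rw [h, hv] at hy; omega
        have hyw : y ≠ w := fun h => by rw [h, hw] at hy; omega
        have hsub : ({v, w, y} : Finset V) ⊆ T.neighborFinset v' := by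
          intro x hx
          simp only [Finset.mem_insert, Finset.mem_singleton] at hx
          rcases hx with rfl | rfl | rfl
          · exact (T.mem_neighborFinset _ _).mpr hv'adj.symm
          · exact (T.mem_neighborFinset _ _).mpr hw'adj.symm
          · exact (T.mem_neighborFinset _ _).mpr hyadj
        have hcard3 : ({v, w, y} : Finset V).card = 3 := by
          rw [Finset.card_insert_of_notMem (by simp [hne, hyv.symm]),
            Finset.card_insert_of_notMem (by simpa using hyw.symm), Finset.card_singleton]
        have := Finset.card_le_card hsub
        rw [hcard3] at this
        have := hdeg v'
        rw [SimpleGraph.degree] at this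
        omega

theorem stmt13 {V : Type*} [Fintype V] (T : SimpleGraph V) (hT : T.IsTree)
    (m : ℕ) (hm : 2 ≤ m) (hcard : Fintype.card V = 2 * m)
    (hpm : ∃ M : T.Subgraph, M.IsPerfectMatching)
    (f : ℝ → ℝ) (hf : StrictConvexOn ℝ Set.univ f) :
    2 * ((m : ℝ) - 1) * f 2 + 2 * f 1 ≤ Hf T f ∧
    (Hf T f = 2 * ((m : ℝ) - 1) * f 2 + 2 * f 1 →
      Nonempty (T ≃g SimpleGraph.pathGraph (2 * m))) := by
  rw [Hf]
  have hconn := hT.isConnected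
  have hedge : T.edgeFinset.card + 1 = 2 * m := by rw [hT.card_edgeFinset, hcard]
  have hdegsum : ∑ v, T.degree v + 2 = 4 * m := by
    have h := SimpleGraph.sum_degrees_eq_twice_card_edges (G := T)
    omega
  have hdegsumR : ∑ v : V, ((T.degree v : ℝ)) = 4 * m - 2 := by
    have hR : (∑ v : V, ((T.degree v : ℝ))) + 2 = 4 * m := by exact_mod_cast hdegsum
    linarith
  have hdegpos : ∀ v, 1 ≤ T.degree v := by
    intro v
    obtain ⟨w, hw⟩ := Fintype.exists_ne_of_one_lt_card (by omega) v
    obtain ⟨p⟩ := hconn v w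
    have hnp : ¬ p.Nil := by
      rw [SimpleGraph.Walk.nil_iff_length_eq]
      intro h
      exact hw.symm (SimpleGraph.Walk.eq_of_length_eq_zero h)
    exact (T.degree_pos_iff_exists_adj v).mpr ⟨p.getVert 1, p.adj_snd hnp⟩
  have hb : ∀ v ∈ Finset.univ, f 2 + (f 2 - f 1) * ((T.degree v : ℝ) - 2) ≤ f (T.degree v) :=
    fun v _ => conv_bound_le f hf (hdegpos v)
  have hsumb : ∑ v : V, (f 2 + (f 2 - f 1) * ((T.degree v : ℝ) - 2)) =
      2 * ((m : ℝ) - 1) * f 2 + 2 * f 1 := by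
    rw [Finset.sum_add_distrib, Finset.sum_const, Finset.card_univ, hcard, ← Finset.mul_sum,
      Finset.sum_sub_distrib, hdegsumR, Finset.sum_const, Finset.card_univ, hcard]
    push_cast; ring
  have hineq : 2 * ((m : ℝ) - 1) * f 2 + 2 * f 1 ≤ ∑ v, f (T.degree v) := by
    rw [← hsumb]; exact Finset.sum_le_sum hb
  refine ⟨hineq, ?_⟩
  intro heq
  have hdeg2 : ∀ v, T.degree v ≤ 2 := by
    by_contra h
    push_neg at h
    obtain ⟨v0, hv0⟩ := h
    have hlt : ∑ v : V, (f 2 + (f 2 - f 1) * ((T.degree v : ℝ) - 2)) < ∑ v, f (T.degree v) :=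
      Finset.sum_lt_sum hb ⟨v0, Finset.mem_univ _, conv_bound f hf (by omega)⟩
    rw [hsumb] at hlt
    linarith
  have hleaf : ∃ u, T.degree u = 1 := by
    by_contra h
    push_neg at h
    have h2 : ∀ v ∈ Finset.univ, 2 ≤ T.degree v := fun v _ => by
      have h1 := hdegpos v; have h3 := h v; omega
    have hs := Finset.sum_le_sum h2
    rw [Finset.sum_const, Finset.card_univ, hcard, smul_eq_mul] at hs
    omega
  obtain ⟨u, hu⟩ := hleaf
  have key := dist_unique hconn u hu hdeg2
  have hdistlt : ∀ v, T.dist u v < 2 * m := by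
    intro v
    obtain ⟨p, hp, hlen⟩ := (hconn u v).exists_path_of_dist
    have := hp.length_lt
    rw [hcard] at this
    omega
  let e : V → Fin (2 * m) := fun v => ⟨T.dist u v, hdistlt v⟩
  have hinj : Function.Injective e := by
    intro v w h
    have hd : T.dist u v = T.dist u w := by
      simpa [e, Fin.mk.injEq] using h
    exact key (T.dist u v) v w rfl hd.symm
  have hbij : Function.Bijective e :=
    (Fintype.bijective_iff_injective_and_card e).mpr ⟨hinj, by simp [hcard]⟩
  refine ⟨⟨Equiv.ofBijective e hbij, ?_⟩⟩
  intro a b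
  show (SimpleGraph.pathGraph (2 * m)).Adj (e a) (e b) ↔ T.Adj a b
  rw [SimpleGraph.pathGraph_adj]
  show T.dist u a + 1 = T.dist u b ∨ T.dist u b + 1 = T.dist u a ↔ T.Adj a b
  constructor
  · rintro (h | h)
    · obtain ⟨x, hx, hxd⟩ := stepdown hconn b u (T.dist u a) (by omega)
      have hxa : x = a := key _ x a hxd rfl
      subst hxa
      exact hx.symm
    · obtain ⟨x, hx, hxd⟩ := stepdown hconn a u (T.dist u b) (by omega)
      have hxb : x = b := key _ x b hxd rfl
      subst hxb
      exact hx
  · intro hab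
    have hne : T.dist u a ≠ T.dist u b := fun h => hab.ne (key _ a b rfl h.symm)
    have hone : T.dist a b = 1 := SimpleGraph.dist_eq_one_iff_adj.mpr hab
    have hone' : T.dist b a = 1 := SimpleGraph.dist_eq_one_iff_adj.mpr hab.symm
    have h1 : T.dist u a ≤ T.dist u b + 1 := by
      have := hconn.dist_triangle (u := u) (v := b) (w := a)
      omega
    have h2 : T.dist u b ≤ T.dist u a + 1 := by
      have := hconn.dist_triangle (u := u) (v := a) (w := b)
      omega
    omega
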